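/- A 3×3 lower unitriangular matrix [[1,0,0],[a,1,0],[b,c,1]] lies in U⁻_{>0} (i.e., equals y₁(a₁)y₂(a₂)y₁(a₃) for some a₁,a₂,a₃ ∈ ℝ_{>0}) if and only if a > 0, c > 0, b > 0 and ac − b > 0. -/

import Mathlib

open Matrix

theorem stmt6 (a b c : ℝ) :
    (∃ a₁ a₂ a₃ : ℝ, 0 < a₁ ∧ 0 < a₂ ∧ 0 < a₃ ∧
      (!![1, 0, 0; a, 1, 0; b, c, 1] : Matrix (Fin 3) (Fin 3) ℝ) =
        !![1, 0, 0; a₁, 1, 0; 0, 0, 1] * !![1, 0, 0; 0, 1, 0; 0, a₂, 1] *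
          !![1, 0, 0; a₃, 1, 0; 0, 0, 1]) ↔
    (0 < a ∧ 0 < c ∧ 0 < b ∧ 0 < a * c - b) := by
  constructor
  · rintro ⟨a₁, a₂, a₃, h₁, h₂, h₃, h⟩
    simp only [Matrix.mul_fin_three] at h
    have ha : a = a₁ + a₃ := by
      have := congrFun (congrFun h 1) 0
      simp at this; linarith
    have hc : c = a₂ := by
      have := congrFun (congrFun h 2) 1
      simp at this; linarith
    have hb : b = a₂ * a₃ := by
      have := congrFun (congrFun h 2) 0
      simp at this; linarith
    refine ⟨by rw [ha]; positivity, by rw [hc]; exact h₂, by rw [hb]; positivity, ?_⟩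
    rw [ha, hb, hc]
    have : (a₁ + a₃) * a₂ - a₂ * a₃ = a₁ * a₂ := by ring
    rw [this]; positivity
  · rintro ⟨ha, hc, hb, hd⟩
    refine ⟨(a * c - b) / c, c, b / c, by positivity, hc, by positivity, ?_⟩
    simp only [Matrix.mul_fin_three]
    ext i j
    fin_cases i <;> fin_cases j <;> simp <;> field_simp <;> ring
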